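/- Let θ > 0 and δ ∈ (0,1). There exists a constant C > 0, depending only on θ and δ, such that for all t ≥ 0: ∫₀^t e^{−2θ(t−s)} e^{−θ⟨s⟩^{1−δ}} ds ≤ C e^{−θ⟨t⟩^{1−δ}}, where ⟨u⟩ = (1+u²)^{1/2}. -/

import Mathlib

noncomputable section

/-- Japanese bracket of a scalar: `⟨u⟩ = (1+u²)^{1/2}`. -/
def jap (u : ℝ) : ℝ := Real.sqrt (1 + u ^ 2)

lemma jap_sq (u : ℝ) : jap u ^ 2 = 1 + u ^ 2 := by
  unfold jap
  rw [Real.sq_sqrt]; nlinarith [sq_nonneg u]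

lemma one_le_jap (u : ℝ) : 1 ≤ jap u := by
  have := Real.sqrt_le_sqrt (show (1:ℝ) ≤ 1 + u ^ 2 by nlinarith [sq_nonneg u])
  simpa [jap] using this

lemma self_le_jap (u : ℝ) : u ≤ jap u := by
  nlinarith [jap_sq u, one_le_jap u]

lemma jap_lip {s t : ℝ} (hst : s ≤ t) : jap t ≤ jap s + (t - s) := by
  have h1 := jap_sq s
  have h2 := self_le_jap s
  have h3 : (0:ℝ) ≤ jap s + (t - s) := by nlinarith [one_le_jap s]
  have : jap t ≤ Real.sqrt ((jap s + (t - s)) ^ 2) := by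
    show Real.sqrt (1 + t ^ 2) ≤ _
    apply Real.sqrt_le_sqrt
    nlinarith
  rwa [Real.sqrt_sq h3] at this

lemma rpow_add_le_add_rpow' {a b p : ℝ} (ha : 0 ≤ a) (hb : 0 ≤ b)
    (hp : 0 ≤ p) (hp1 : p ≤ 1) : (a + b) ^ p ≤ a ^ p + b ^ p := by
  have h := NNReal.rpow_add_le_add_rpow a.toNNReal b.toNNReal hp hp1
  have := NNReal.coe_le_coe.2 h
  push_cast at this
  rwa [Real.coe_toNNReal _ ha, Real.coe_toNNReal _ hb] at this

/-- the convolution estimate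
`∫₀^t e^{-2θ(t-s)} e^{-θ⟨s⟩^{1-δ}} ds ≤ C e^{-θ⟨t⟩^{1-δ}}`. -/
theorem exp_convolution_bound (θ δ : ℝ) (hθ : 0 < θ) (hδ0 : 0 < δ) (hδ1 : δ < 1) :
    ∃ C > (0:ℝ), ∀ t : ℝ, 0 ≤ t →
      (∫ s in (0:ℝ)..t,
        Real.exp (-2 * θ * (t - s)) * Real.exp (-θ * jap s ^ (1 - δ))) ≤
      C * Real.exp (-θ * jap t ^ (1 - δ)) := by
  set p := 1 - δ with hp
  have hp0 : 0 ≤ p := by linarith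
  have hp1 : p ≤ 1 := by linarith
  refine ⟨Real.exp θ / θ, by positivity, fun t ht => ?_⟩
  -- pointwise bound
  have key : ∀ s ∈ Set.Icc (0:ℝ) t,
      Real.exp (-2 * θ * (t - s)) * Real.exp (-θ * jap s ^ p) ≤
      Real.exp θ * Real.exp (-θ * jap t ^ p) * Real.exp (-θ * (t - s)) := by
    intro s hs
    obtain ⟨hs0, hst⟩ := hs
    rw [← Real.exp_add, ← Real.exp_add, ← Real.exp_add]
    apply Real.exp_le_exp.2
    -- need: -2θ(t-s) - θ jap s ^ p ≤ θ - θ jap t ^ p - θ(t-s)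
    have h1 : jap t ≤ jap s + (t - s) := jap_lip hst
    have h2 : jap t ^ p ≤ (jap s + (t - s)) ^ p :=
      Real.rpow_le_rpow (by linarith [one_le_jap t]) h1 hp0
    have h3 : (jap s + (t - s)) ^ p ≤ jap s ^ p + (t - s) ^ p :=
      rpow_add_le_add_rpow' (by linarith [one_le_jap s]) (by linarith) hp0 hp1
    have h4 : (t - s) ^ p ≤ 1 + (t - s) := by
      rcases le_or_gt (t - s) 1 with h | h
      · have := Real.rpow_le_one (by linarith) h hp0
        linarith
      · have : (t - s) ^ p ≤ (t - s) ^ (1:ℝ) :=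
          Real.rpow_le_rpow_of_exponent_le (by linarith) hp1
        rw [Real.rpow_one] at this
        linarith
    nlinarith [h2, h3, h4]
  -- integrability
  have hc1 : Continuous fun s : ℝ =>
      Real.exp (-2 * θ * (t - s)) * Real.exp (-θ * jap s ^ p) := by
    apply Continuous.mul
    · exact (Real.continuous_exp.comp (by fun_prop))
    · apply Real.continuous_exp.comp
      apply Continuous.mul continuous_const
      have hjap : Continuous jap := Real.continuous_sqrt.comp (by fun_prop)
      exact hjap.rpow_const fun x => Or.inl (by have := one_le_jap x; linarith)
  have hc2 : Continuous fun s : ℝ =>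
      Real.exp θ * Real.exp (-θ * jap t ^ p) * Real.exp (-θ * (t - s)) :=
    Continuous.mul continuous_const (Real.continuous_exp.comp (by fun_prop))
  have hmono := intervalIntegral.integral_mono_on (μ := MeasureTheory.volume) ht
    (hc1.intervalIntegrable 0 t) (hc2.intervalIntegrable 0 t) key
  refine hmono.trans ?_
  -- compute ∫₀^t e^{-θ(t-s)} ds
  have hder : ∀ s : ℝ, HasDerivAt (fun s => θ⁻¹ * Real.exp (-θ * (t - s)))
      (Real.exp (-θ * (t - s))) s := by
    intro s
    have h1 : HasDerivAt (fun s : ℝ => -θ * (t - s)) θ s := by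
      have := ((hasDerivAt_id s).const_sub t).const_mul (-θ)
      simpa using this
    have h2 := h1.exp.const_mul θ⁻¹
    rw [mul_comm (Real.exp _) θ, inv_mul_cancel_left₀ hθ.ne'] at h2
    convert h2 using 1
  have hI : (∫ s in (0:ℝ)..t, Real.exp (-θ * (t - s)))
      = θ⁻¹ * Real.exp (-θ * (t - t)) - θ⁻¹ * Real.exp (-θ * (t - 0)) := by
    exact intervalIntegral.integral_eq_sub_of_hasDerivAt
      (fun s _ => hder s)
      ((Real.continuous_exp.comp (by fun_prop)).intervalIntegrable 0 t)
  rw [intervalIntegral.integral_const_mul, hI]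
  have hE : 0 < Real.exp (-θ * jap t ^ p) := Real.exp_pos _
  have h1 : Real.exp (-θ * (t - 0)) > 0 := Real.exp_pos _
  have h2 : Real.exp (-θ * (t - t)) = 1 := by norm_num
  rw [h2]
  rw [div_mul_eq_mul_div, div_eq_mul_inv]
  have hθi : (0:ℝ) < θ⁻¹ := by positivity
  nlinarith [Real.exp_pos θ, mul_pos (mul_pos (Real.exp_pos θ) hE) (mul_pos hθi h1)]
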